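/- For any R ⊆ [0,1]^E, the projection onto the (ρ,y)-coordinates of the set of triples (ρ,y,x) in the perspective system with x ∈ [0,1]^V equals {(ρ,y) ∈ ℝ × ℝ^E : ρ ≥ 0, y ∈ ρ·R, ρ + Σ_{e∈E} v_e y_e = 1}; that is, eliminating the x-variables from the continuous relaxation of the perspective system imposes no additional constraints on (ρ,y). In particular, every (ρ,y) with ρ ≥ 0, 0 ≤ y_e ≤ ρ for all e, and ρ + Σ_{e∈E} v_e y_e = 1 satisfies max{0, L_i(ρ,y)} ≤ min{1, U_i(ρ,y)} for every i ∈ V. -/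

import Mathlib

open Finset

/-- A vector is binary if each coordinate is 0 or 1. -/
def IsBinaryVec {α : Type*} (x : α → ℝ) : Prop := ∀ i, x i = 0 ∨ x i = 1

variable {N : ℕ}

/-- The denominator `D(x) = 1 + Σ_{c∈E} v_c ∏_{i∈c} x_i`. -/
noncomputable def Dx (E : Finset (Finset (Fin N))) (v : Finset (Fin N) → ℝ)
    (x : Fin N → ℝ) : ℝ :=
  1 + ∑ c ∈ E, v c * ∏ i ∈ c, x i

/-- The choice probability set `C_G`. -/
def choiceSet (E : Finset (Finset (Fin N))) (v : Finset (Fin N) → ℝ) :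
    Set (ℝ × ({e // e ∈ E} → ℝ)) :=
  {p | ∃ x : Fin N → ℝ, IsBinaryVec x ∧ p.1 = 1 / Dx E v x ∧
      ∀ e : {e // e ∈ E}, p.2 e = (∏ i ∈ e.1, x i) / Dx E v x}

/-- The monomial set `M_G`. -/
def monoSet (E : Finset (Finset (Fin N))) : Set ({e // e ∈ E} → ℝ) :=
  {z | ∃ x : Fin N → ℝ, IsBinaryVec x ∧ ∀ e : {e // e ∈ E}, z e = ∏ i ∈ e.1, x i}

/-- An exact relaxation oracle: `R ⊆ [0,1]^E`, `M_G ⊆ R`, and every `z ∈ R` with binary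
singleton coordinates is the corresponding monomial vector. -/
def IsExactOracle (E : Finset (Finset (Fin N)))
    (hsing : ∀ i : Fin N, ({i} : Finset (Fin N)) ∈ E)
    (R : Set ({e // e ∈ E} → ℝ)) : Prop :=
  (∀ z ∈ R, ∀ e : {e // e ∈ E}, z e ∈ Set.Icc (0 : ℝ) 1) ∧
  monoSet E ⊆ R ∧
  (∀ z ∈ R, (∀ i : Fin N, z ⟨{i}, hsing i⟩ = 0 ∨ z ⟨{i}, hsing i⟩ = 1) →
    ∀ e : {e // e ∈ E}, z e = ∏ i ∈ e.1, z ⟨{i}, hsing i⟩)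

/-- `L_i(ρ,y)`. -/
noncomputable def Lb (E : Finset (Finset (Fin N)))
    (hsing : ∀ i : Fin N, ({i} : Finset (Fin N)) ∈ E)
    (v : Finset (Fin N) → ℝ) (ρ : ℝ) (y : {e // e ∈ E} → ℝ) (i : Fin N) : ℝ :=
  y ⟨{i}, hsing i⟩ +
    ∑ e ∈ E.attach, (if i ∈ e.1 then v e.1 * y e
      else v e.1 * max 0 (y ⟨{i}, hsing i⟩ + y e - ρ))

/-- `U_i(ρ,y)`. -/
noncomputable def Ub (E : Finset (Finset (Fin N)))
    (hsing : ∀ i : Fin N, ({i} : Finset (Fin N)) ∈ E)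
    (v : Finset (Fin N) → ℝ) (ρ : ℝ) (y : {e // e ∈ E} → ℝ) (i : Fin N) : ℝ :=
  y ⟨{i}, hsing i⟩ +
    ∑ e ∈ E.attach, (if i ∈ e.1 then v e.1 * y e
      else v e.1 * min (y ⟨{i}, hsing i⟩) (y e))

/-- The perspective system. -/
noncomputable def persSystem (E : Finset (Finset (Fin N)))
    (hsing : ∀ i : Fin N, ({i} : Finset (Fin N)) ∈ E)
    (v : Finset (Fin N) → ℝ) (R : Set ({e // e ∈ E} → ℝ)) :
    Set (ℝ × ({e // e ∈ E} → ℝ) × (Fin N → ℝ)) :=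
  {p | 0 ≤ p.1 ∧ (∃ z ∈ R, p.2.1 = p.1 • z) ∧
      p.1 + ∑ e ∈ E.attach, v e.1 * p.2.1 e = 1 ∧
      ∀ i : Fin N, Lb E hsing v p.1 p.2.1 i ≤ p.2.2 i ∧
        p.2.2 i ≤ Ub E hsing v p.1 p.2.1 i}

/-- Eliminating `x` from the continuous relaxation of the perspective system imposes no
additional constraint on `(ρ,y)`: the projection equals
`{(ρ,y) : ρ ≥ 0, y ∈ ρ·R, ρ + Σ_e v_e y_e = 1}`.  In particular, every `(ρ,y)` with
`ρ ≥ 0`, `0 ≤ y_e ≤ ρ`, and `ρ + Σ_e v_e y_e = 1` satisfies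
`max{0, L_i(ρ,y)} ≤ min{1, U_i(ρ,y)}` for every `i`. -/
lemma key_bound {N : ℕ} (E : Finset (Finset (Fin N)))
    (hsing : ∀ i : Fin N, ({i} : Finset (Fin N)) ∈ E)
    (v : Finset (Fin N) → ℝ) (hv : ∀ e ∈ E, 0 < v e)
    (ρ : ℝ) (y : {e // e ∈ E} → ℝ) (hρ : 0 ≤ ρ)
    (hy : ∀ e : {e // e ∈ E}, 0 ≤ y e ∧ y e ≤ ρ)
    (hsum : ρ + ∑ e ∈ E.attach, v e.1 * y e = 1)
    (i : Fin N) : max 0 (Lb E hsing v ρ y i) ≤ min 1 (Ub E hsing v ρ y i) := by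
  obtain ⟨hys0, hysρ⟩ := hy ⟨{i}, hsing i⟩
  have hLU : Lb E hsing v ρ y i ≤ Ub E hsing v ρ y i := by
    unfold Lb Ub
    apply add_le_add_right
    apply Finset.sum_le_sum
    intro e he
    by_cases h : i ∈ e.1
    · simp [h]
    · simp only [h, if_false]
      obtain ⟨h0, hρe⟩ := hy e
      apply mul_le_mul_of_nonneg_left _ (hv e.1 e.2).le
      exact max_le (le_min hys0 h0) (le_min (by linarith) (by linarith))
  have hL1 : Lb E hsing v ρ y i ≤ 1 := by
    have h2 : Lb E hsing v ρ y i ≤ y ⟨{i}, hsing i⟩ + ∑ e ∈ E.attach, v e.1 * y e := by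
      unfold Lb
      apply add_le_add_right
      apply Finset.sum_le_sum
      intro e he
      by_cases h : i ∈ e.1
      · simp [h]
      · simp only [h, if_false]
        obtain ⟨h0, hρe⟩ := hy e
        exact mul_le_mul_of_nonneg_left (max_le h0 (by linarith)) (hv e.1 e.2).le
    linarith
  have hU0 : 0 ≤ Ub E hsing v ρ y i := by
    unfold Ub
    have hs : 0 ≤ ∑ e ∈ E.attach,
        (if i ∈ e.1 then v e.1 * y e else v e.1 * min (y ⟨{i}, hsing i⟩) (y e)) := by
      apply Finset.sum_nonneg
      intro e he
      obtain ⟨h0, _⟩ := hy e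
      by_cases h : i ∈ e.1
      · simp only [h, if_true]; exact mul_nonneg (hv e.1 e.2).le h0
      · simp only [h, if_false]; exact mul_nonneg (hv e.1 e.2).le (le_min hys0 h0)
    linarith
  exact max_le (le_min zero_le_one hU0) (le_min hL1 hLU)

theorem perspective_projection_no_extra_constraints
    (N : ℕ) (hN : 1 ≤ N)
    (E : Finset (Finset (Fin N)))
    (hne : ∀ e ∈ E, e.Nonempty)
    (hsing : ∀ i : Fin N, ({i} : Finset (Fin N)) ∈ E)
    (v : Finset (Fin N) → ℝ) (hv : ∀ e ∈ E, 0 < v e)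
    (R : Set ({e // e ∈ E} → ℝ))
    (hR01 : ∀ z ∈ R, ∀ e : {e // e ∈ E}, z e ∈ Set.Icc (0 : ℝ) 1) :
    ({p : ℝ × ({e // e ∈ E} → ℝ) |
        ∃ x : Fin N → ℝ, (∀ i, x i ∈ Set.Icc (0 : ℝ) 1) ∧
          (p.1, p.2, x) ∈ persSystem E hsing v R}
      = {p : ℝ × ({e // e ∈ E} → ℝ) |
          0 ≤ p.1 ∧ (∃ z ∈ R, p.2 = p.1 • z) ∧
          p.1 + ∑ e ∈ E.attach, v e.1 * p.2 e = 1}) ∧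
    (∀ (ρ : ℝ) (y : {e // e ∈ E} → ℝ), 0 ≤ ρ →
      (∀ e : {e // e ∈ E}, 0 ≤ y e ∧ y e ≤ ρ) →
      ρ + ∑ e ∈ E.attach, v e.1 * y e = 1 →
      ∀ i : Fin N, max 0 (Lb E hsing v ρ y i) ≤ min 1 (Ub E hsing v ρ y i)) := by
  have key := key_bound E hsing v hv
  constructor
  · ext p
    simp only [Set.mem_setOf_eq, persSystem]
    constructor
    · rintro ⟨x, hx, h0, hz, hsum, hLU⟩
      exact ⟨h0, hz, hsum⟩
    · rintro ⟨h0, ⟨z, hzR, hzy⟩, hsum⟩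
      have hy : ∀ e : {e // e ∈ E}, 0 ≤ p.2 e ∧ p.2 e ≤ p.1 := by
        intro e
        have hz01 := hR01 z hzR e
        rw [hzy]
        simp only [Pi.smul_apply, smul_eq_mul]
        exact ⟨mul_nonneg h0 hz01.1, by nlinarith [hz01.2]⟩
      refine ⟨fun i => max 0 (Lb E hsing v p.1 p.2 i), ?_, h0, ⟨z, hzR, hzy⟩, hsum, ?_⟩
      · intro i
        have hk := key p.1 p.2 h0 hy hsum i
        exact ⟨le_max_left _ _, le_trans hk (min_le_left _ _)⟩
      · intro i
        have hk := key p.1 p.2 h0 hy hsum i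
        exact ⟨le_max_right _ _, le_trans hk (min_le_right _ _)⟩
  · intro ρ y hρ hy hsum i
    exact key ρ y hρ hy hsum i
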